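/- With Γ_X as above, for finite vertex sets X ⊆ X' the map f_{X',X}: Γ_{X'} → Γ_X that restricts to c_{X',X} on C_{X'}, is the identity on crit(X') ∩ crit(X), and sends each Y ∈ crit(X') ∖ crit(X) to the unique component of G − X meeting Y, is continuous. -/

import Mathlib

open SimpleGraph Set

variable {V : Type*}

/-- The set of components of `G - X` (the subgraph of `G` induced on `Xᶜ`). -/
abbrev Comps (G : SimpleGraph V) (X : Set V) := (G.induce Xᶜ).ConnectedComponent

/-- The vertex set (in `V`) of a component of `G - X`. -/
def suppV (G : SimpleGraph V) (X : Set V) (C : Comps G X) : Set V :=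
  Subtype.val '' {v | (G.induce Xᶜ).connectedComponentMk v = C}

/-- The neighbourhood `N(C) ⊆ X` of a component `C` of `G - X`. -/
def nbhd (G : SimpleGraph V) (X : Set V) (C : Comps G X) : Set V :=
  {x ∈ X | ∃ v ∈ suppV G X C, G.Adj x v}

/-- `C_X(Y)`: the components of `G - X` with neighbourhood exactly `Y`. -/
def compsWithNbhd (G : SimpleGraph V) (X Y : Set V) : Set (Comps G X) :=
  {C | nbhd G X C = Y}

/-- A finite vertex set `Y` is critical if `C_Y(Y)` is infinite. -/
def Critical (G : SimpleGraph V) (Y : Set V) : Prop :=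
  Y.Finite ∧ (compsWithNbhd G Y Y).Infinite

/-- The inclusion graph homomorphism `G - X' → G - X`, for `X ⊆ X'`. -/
def inclHom (G : SimpleGraph V) {X X' : Set V} (h : X ⊆ X') :
    (G.induce X'ᶜ) →g (G.induce Xᶜ) where
  toFun v := ⟨v.1, fun hv => v.2 (h hv)⟩
  map_rel' := fun hadj => hadj

/-- `c_{X',X}`: sends each component of `G - X'` to the component of `G - X`
containing it. -/
def compMap (G : SimpleGraph V) {X X' : Set V} (h : X ⊆ X') :
    Comps G X' → Comps G X :=
  SimpleGraph.ConnectedComponent.map (inclHom G h)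

/-- `crit(X)`: the critical subsets of `X`. -/
def CritIn (G : SimpleGraph V) (X : Set V) : Set (Set V) :=
  {Y | Y ⊆ X ∧ Critical G Y}

/-- `Γ_X = C_X ⊔ crit(X)`. -/
def Gamma (G : SimpleGraph V) (X : Set V) := Comps G X ⊕ CritIn G X

/-- The basic open sets of `Γ_X`: singletons of components, and, for each critical
`Y ⊆ X` and cofinite `𝒞 ⊆ C_X(Y)`, the set `𝒞 ∪ {Y}`. -/
def gammaBasic (G : SimpleGraph V) (X : Set V) : Set (Set (Gamma G X)) :=
  {s | ∃ C : Comps G X, s = {Sum.inl C}} ∪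
  {s | ∃ (Y : CritIn G X) (𝒞 : Set (Comps G X)),
      𝒞 ⊆ compsWithNbhd G X Y.1 ∧ (compsWithNbhd G X Y.1 \ 𝒞).Finite ∧
      s = Sum.inl '' 𝒞 ∪ {Sum.inr Y}}

/-- The topology of `Γ_X`. -/
def gammaTop (G : SimpleGraph V) (X : Set V) : TopologicalSpace (Gamma G X) :=
  .generateFrom (gammaBasic G X)

namespace Aux

variable (G : SimpleGraph V)

lemma mem_suppV {X : Set V} {C : Comps G X} {v : V} :
    v ∈ suppV G X C ↔ ∃ hv : v ∈ Xᶜ, (G.induce Xᶜ).connectedComponentMk ⟨v, hv⟩ = C := by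
  constructor
  · rintro ⟨⟨w, hw⟩, hmk, rfl⟩; exact ⟨hw, hmk⟩
  · rintro ⟨hv, hmk⟩; exact ⟨⟨v, hv⟩, hmk, rfl⟩

lemma suppV_nonempty {X : Set V} (C : Comps G X) : (suppV G X C).Nonempty := by
  obtain ⟨v, hv⟩ := C.exists_rep
  exact ⟨v.1, v, hv, rfl⟩

lemma suppV_subset {X : Set V} (C : Comps G X) : suppV G X C ⊆ Xᶜ := by
  rintro v ⟨⟨w, hw⟩, _, rfl⟩; exact hw

lemma supp_subset_compMap {X X' : Set V} (h : X ⊆ X') (C' : Comps G X') :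
    suppV G X' C' ⊆ suppV G X (compMap G h C') := by
  rintro v ⟨⟨w, hw⟩, hmk, rfl⟩
  refine ⟨⟨w, fun hx => hw (h hx)⟩, ?_, rfl⟩
  show (G.induce Xᶜ).connectedComponentMk (inclHom G h ⟨w, hw⟩) = _
  rw [← hmk, compMap, ConnectedComponent.map_mk]

lemma comp_eq_of_supp_eq {X : Set V} {C D : Comps G X}
    (h : suppV G X C = suppV G X D) : C = D := by
  obtain ⟨v, hv⟩ := suppV_nonempty G C
  have hv' : v ∈ suppV G X D := h ▸ hv
  obtain ⟨h1, h2⟩ := (mem_suppV G).1 hv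
  obtain ⟨h1', h2'⟩ := (mem_suppV G).1 hv'
  rw [← h2, ← h2']

lemma supp_closed {X X' : Set V} (h : X ⊆ X') {Y : Set V} (hY : Y ⊆ X)
    {D' : Comps G X'} (hD' : nbhd G X' D' = Y)
    {w z : V} (hw : w ∈ suppV G X' D') (hz : z ∈ Xᶜ) (hadj : G.Adj w z) :
    z ∈ suppV G X' D' := by
  by_cases hz' : z ∈ X'
  · exact absurd (hY (hD' ▸ (⟨hz', w, hw, hadj.symm⟩ : z ∈ nbhd G X' D'))) hz
  · obtain ⟨hw', hmk⟩ := (mem_suppV G).1 hw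
    refine (mem_suppV G).2 ⟨hz', ?_⟩
    rw [← hmk]
    exact (ConnectedComponent.sound (Adj.reachable (by exact hadj : (G.induce X'ᶜ).Adj ⟨w, hw'⟩ ⟨z, hz'⟩))).symm

lemma walk_supp {X X' : Set V} (h : X ⊆ X') {Y : Set V} (hY : Y ⊆ X)
    {D' : Comps G X'} (hD' : nbhd G X' D' = Y) {a b : ↥(Xᶜ)}
    (p : (G.induce Xᶜ).Walk a b) (ha : a.1 ∈ suppV G X' D') : b.1 ∈ suppV G X' D' := by
  induction p with
  | nil => exact ha
  | @cons a c b hadj p ih =>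
    exact ih (supp_closed G h hY hD' ha c.2 (by exact hadj))

lemma supp_compMap_eq {X X' : Set V} (h : X ⊆ X') {Y : Set V} (hY : Y ⊆ X)
    {D' : Comps G X'} (hD' : nbhd G X' D' = Y) :
    suppV G X (compMap G h D') = suppV G X' D' := by
  refine Subset.antisymm ?_ (supp_subset_compMap G h D')
  intro v hv
  obtain ⟨hv', hmkv⟩ := (mem_suppV G).1 hv
  obtain ⟨u, hu⟩ := suppV_nonempty G D'
  have hu2 : u ∈ suppV G X (compMap G h D') := supp_subset_compMap G h D' hu
  obtain ⟨hu', hmku⟩ := (mem_suppV G).1 hu2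
  obtain ⟨p⟩ := ConnectedComponent.exact (hmku.trans hmkv.symm)
  exact walk_supp G h hY hD' p hu

lemma compMap_mem {X X' : Set V} (h : X ⊆ X') {Y : Set V} (hY : Y ⊆ X)
    {D' : Comps G X'} (hD' : D' ∈ compsWithNbhd G X' Y) :
    compMap G h D' ∈ compsWithNbhd G X Y := by
  have hs := supp_compMap_eq G h hY hD'
  have hD'' : nbhd G X' D' = Y := hD'
  show nbhd G X (compMap G h D') = Y
  ext x
  simp only [nbhd, mem_setOf_eq, hs]
  constructor
  · rintro ⟨hx, v, hv, ha⟩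
    exact hD'' ▸ (⟨h hx, v, hv, ha⟩ : x ∈ nbhd G X' D')
  · intro hxY
    obtain ⟨-, v, hv, ha⟩ := (hD'' ▸ hxY : x ∈ nbhd G X' D')
    exact ⟨hY hxY, v, hv, ha⟩

lemma compMap_injOn {X X' : Set V} (h : X ⊆ X') {Y : Set V} (hY : Y ⊆ X) :
    Set.InjOn (compMap G h) (compsWithNbhd G X' Y) := by
  intro D1 h1 D2 h2 heq
  apply comp_eq_of_supp_eq G
  rw [← supp_compMap_eq G h hY h1, ← supp_compMap_eq G h hY h2, heq]

lemma compMap_eq_of_mem_nbhd {X X' : Set V} (h : X ⊆ X') {Z : Set V}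
    {D' : Comps G X'} (hD' : nbhd G X' D' = Z) {y : V} (hy : y ∈ Z) (hyX : y ∈ Xᶜ) :
    compMap G h D' = (G.induce Xᶜ).connectedComponentMk ⟨y, hyX⟩ := by
  obtain ⟨-, v, hv, ha⟩ := (hD' ▸ hy : y ∈ nbhd G X' D')
  obtain ⟨hv', hmk⟩ := (mem_suppV G).1 (supp_subset_compMap G h D' hv)
  rw [← hmk]
  exact (ConnectedComponent.sound
    (Adj.reachable (by exact ha.symm : (G.induce Xᶜ).Adj ⟨v, hv'⟩ ⟨y, hyX⟩)))

lemma isOpen_of_basic_nbhds {α : Type*} {B : Set (Set α)} {s : Set α}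
    (h : ∀ x ∈ s, ∃ t ∈ B, x ∈ t ∧ t ⊆ s) :
    @IsOpen α (TopologicalSpace.generateFrom B) s := by
  have hs : s = ⋃₀ {t | t ∈ B ∧ t ⊆ s} := by
    ext x
    constructor
    · intro hx
      obtain ⟨t, ht, hxt, hts⟩ := h x hx
      exact ⟨t, ⟨ht, hts⟩, hxt⟩
    · rintro ⟨t, ⟨-, hts⟩, hxt⟩
      exact hts hxt
  rw [hs]
  exact TopologicalSpace.GenerateOpen.sUnion _
    fun t ht => TopologicalSpace.GenerateOpen.basic t ht.1

end Aux

/-- For `X ⊆ X'`, the map `f_{X',X} : Γ_{X'} → Γ_X` that restricts to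
`c_{X',X}` on `C_{X'}`, is the identity on `crit(X') ∩ crit(X)`, and sends each
`Y ∈ crit(X') ∖ crit(X)` to the (unique) component of `G - X` meeting `Y`, is
continuous. -/
theorem stmt14 (G : SimpleGraph V) (X X' : Set V) (hX' : X'.Finite)
    (hXX' : X ⊆ X') (f : Gamma G X' → Gamma G X)
    (h1 : ∀ C' : Comps G X', f (Sum.inl C') = Sum.inl (compMap G hXX' C'))
    (h2 : ∀ Y : CritIn G X', ∀ hY : Y.1 ⊆ X,
      f (Sum.inr Y) = Sum.inr ⟨Y.1, hY, Y.2.2⟩)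
    (h3 : ∀ Y : CritIn G X', ¬ Y.1 ⊆ X →
      ∃ C : Comps G X, f (Sum.inr Y) = Sum.inl C ∧
        (suppV G X C ∩ Y.1).Nonempty) :
    @Continuous (Gamma G X') (Gamma G X) (gammaTop G X') (gammaTop G X) f := by
  show @Continuous (Gamma G X') (Gamma G X) (gammaTop G X')
    (TopologicalSpace.generateFrom (gammaBasic G X)) f
  rw [continuous_generateFrom_iff]
  intro s hs
  show @IsOpen _ (TopologicalSpace.generateFrom (gammaBasic G X')) (f ⁻¹' s)
  apply Aux.isOpen_of_basic_nbhds
  intro x hx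
  -- useful: the "full cofinite neighbourhood" of a critical Z in Γ_{X'}
  have fullBasic : ∀ Z : CritIn G X',
      (Sum.inl '' (compsWithNbhd G X' Z.1) ∪ {Sum.inr Z}) ∈ gammaBasic G X' :=
    fun Z => Or.inr ⟨Z, compsWithNbhd G X' Z.1, Subset.rfl, by simp, rfl⟩
  rcases hs with ⟨C, rfl⟩ | ⟨Y, 𝒞, h𝒞, hfin, rfl⟩
  · -- s = {Sum.inl C}
    match x with
    | Sum.inl C' =>
      exact ⟨{Sum.inl C'}, Or.inl ⟨C', rfl⟩, rfl, by
        rintro y rfl; exact hx⟩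
    | Sum.inr Z =>
      by_cases hZ : Z.1 ⊆ X
      · exfalso
        have := hx
        change f (Sum.inr Z) = Sum.inl C at this; rw [h2 Z hZ] at this
        exact Sum.inr_ne_inl this
      · obtain ⟨C₀, hfC₀, v, hvC₀, hvZ⟩ := h3 Z hZ
        have hCC : C₀ = C := by
          have := hx
          change f (Sum.inr Z) = Sum.inl C at this; rw [hfC₀] at this
          exact Sum.inl.inj this
        obtain ⟨hv', hmkv⟩ := (Aux.mem_suppV G).1 hvC₀
        refine ⟨Sum.inl '' (compsWithNbhd G X' Z.1) ∪ {Sum.inr Z}, fullBasic Z,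
          Or.inr rfl, ?_⟩
        rintro y (⟨D', hD', rfl⟩ | hy)
        · show f (Sum.inl D') = Sum.inl C; rw [h1]; refine congrArg Sum.inl ?_
          rw [Aux.compMap_eq_of_mem_nbhd G hXX' hD' hvZ hv', hmkv, hCC]
        · have hy : y = Sum.inr Z := hy; subst hy; exact hx
  · -- s = Sum.inl '' 𝒞 ∪ {Sum.inr Y}
    match x with
    | Sum.inl C' =>
      exact ⟨{Sum.inl C'}, Or.inl ⟨C', rfl⟩, rfl, by rintro y rfl; exact hx⟩
    | Sum.inr Z =>
      by_cases hZ : Z.1 ⊆ X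
      · -- f (inr Z) = inr ⟨Z.1,...⟩, so Z.1 = Y.1
        have hxx := hx
        replace hxx : f (Sum.inr Z) = Sum.inr Y ∨ f (Sum.inr Z) ∈ Sum.inl '' 𝒞 := hxx.symm
        rw [h2 Z hZ] at hxx
        rcases hxx with heq | ⟨D, _, hD⟩
        swap
        · exact absurd hD Sum.inl_ne_inr
        have hZY : Z.1 = Y.1 := congrArg Subtype.val (Sum.inr.inj heq)
        -- the refined cofinite set
        set 𝒞' : Set (Comps G X') :=
          {D' ∈ compsWithNbhd G X' Z.1 | compMap G hXX' D' ∈ 𝒞} with h𝒞'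
        have hsub : 𝒞' ⊆ compsWithNbhd G X' Z.1 := fun D' hD' => hD'.1
        have himg : compMap G hXX' '' (compsWithNbhd G X' Z.1 \ 𝒞') ⊆
            compsWithNbhd G X Y.1 \ 𝒞 := by
          rintro D ⟨D', ⟨hD'1, hD'2⟩, rfl⟩
          refine ⟨hZY ▸ Aux.compMap_mem G hXX' hZ hD'1, fun hmem => hD'2 ⟨hD'1, hmem⟩⟩
        have hfin' : (compsWithNbhd G X' Z.1 \ 𝒞').Finite :=
          Set.Finite.of_finite_image (hfin.subset himg)
            ((Aux.compMap_injOn G hXX' hZ).mono diff_subset)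
        refine ⟨Sum.inl '' 𝒞' ∪ {Sum.inr Z},
          Or.inr ⟨Z, 𝒞', hsub, hfin', rfl⟩, Or.inr rfl, ?_⟩
        rintro y (⟨D', hD', rfl⟩ | hy)
        · show f (Sum.inl D') ∈ Sum.inl '' 𝒞 ∪ ({Sum.inr Y} : Set (Gamma G X)); rw [h1]
          exact Or.inl ⟨compMap G hXX' D', hD'.2, rfl⟩
        · have hy : y = Sum.inr Z := hy; subst hy; exact hx
      · obtain ⟨C₀, hfC₀, v, hvC₀, hvZ⟩ := h3 Z hZ
        have hC₀𝒞 : C₀ ∈ 𝒞 := by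
          have hxx := hx
          replace hxx : f (Sum.inr Z) = Sum.inr Y ∨ f (Sum.inr Z) ∈ Sum.inl '' 𝒞 := hxx.symm
          rw [hfC₀] at hxx
          rcases hxx with heq | ⟨D, hD𝒞, hD⟩
          · exact absurd heq Sum.inl_ne_inr
          · exact Sum.inl.inj hD ▸ hD𝒞
        obtain ⟨hv', hmkv⟩ := (Aux.mem_suppV G).1 hvC₀
        refine ⟨Sum.inl '' (compsWithNbhd G X' Z.1) ∪ {Sum.inr Z}, fullBasic Z,
          Or.inr rfl, ?_⟩
        rintro y (⟨D', hD', rfl⟩ | hy)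
        · show f (Sum.inl D') ∈ Sum.inl '' 𝒞 ∪ ({Sum.inr Y} : Set (Gamma G X)); rw [h1]
          refine Or.inl ⟨compMap G hXX' D', ?_, rfl⟩
          rwa [Aux.compMap_eq_of_mem_nbhd G hXX' hD' hvZ hv', hmkv]
        · have hy : y = Sum.inr Z := hy; subst hy; exact hx
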